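/- Let q be a prime power, n ≥ 3, and let (a_1,...,a_n) ∈ F_q[t]^n be a tuple of polynomials generating the unit ideal, with d = max_i deg(a_i), such that for every i, deg(a_i) ≤ max_{j≠i} deg(a_j), and for every irreducible polynomial p, p divides at most n-2 of the a_i. Let N ≥ d, let V_N be the set of polynomials of degree < N, fix j with 1 ≤ j ≤ n and fix x_j ∈ V_N. Then the number of tuples (x_1,...,x_{j-1},x_{j+1},...,x_n) ∈ V_N^{n-1} with Σ_{i=1}^n a_i x_i = 0 equals q^{N(n-2)-d}. -/

import Mathlib

open scoped Classical

open Polynomial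

private lemma surj_lemma {F : Type} [Field F] {ι : Type} [DecidableEq ι] (s : Finset ι) :
    ∀ (b : ι → Polynomial F), IsUnit (s.gcd b) →
    ∀ (N : ℕ), (∀ i ∈ s, (b i).natDegree ≤ N) →
    ∀ f : Polynomial F,
      f.degree < (((N + s.sup fun i => (b i).natDegree : ℕ)) : WithBot ℕ) →
    ∃ x : ι → Polynomial F, (∀ i, (x i).degree < (N : WithBot ℕ)) ∧ ∑ i ∈ s, b i * x i = f := by
  induction s using Finset.strongInduction with
  | _ s IH =>
  intro b hunit N hbN f hf
  have hs : s.Nonempty := by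
    rcases s.eq_empty_or_nonempty with rfl | h
    · rw [Finset.gcd_empty] at hunit
      exact absurd hunit not_isUnit_zero
    · exact h
  obtain ⟨i0, hi0, hsup⟩ := Finset.exists_mem_eq_sup s hs (fun i => (b i).natDegree)
  have solve_unit : ∀ k ∈ s, IsUnit (b k) → (∀ i ∈ s, i ≠ k → b i = 0) →
      ∃ x : ι → Polynomial F, (∀ i, (x i).degree < (N : WithBot ℕ)) ∧
        ∑ i ∈ s, b i * x i = f := by
    intro k hk hu hz
    obtain ⟨w, hw⟩ := hu
    have hdsup : (s.sup fun i => (b i).natDegree) = 0 := by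
      apply Nat.le_zero.mp
      apply Finset.sup_le
      intro i hi
      by_cases hik : i = k
      · subst hik
        rw [← hw, Polynomial.natDegree_eq_zero_of_isUnit w.isUnit]
      · rw [hz i hi hik]; simp
    refine ⟨fun i => if i = k then (↑w⁻¹ : Polynomial F) * f else 0, ?_, ?_⟩
    · intro i
      by_cases hik : i = k
      · simp only [hik, if_pos rfl]
        have : ((↑w⁻¹ : Polynomial F) * f).degree ≤ f.degree := by
          rw [Polynomial.degree_mul, Polynomial.degree_eq_zero_of_isUnit w⁻¹.isUnit, zero_add]
        refine lt_of_le_of_lt this ?_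
        rw [hdsup, add_zero] at hf
        exact hf
      · simp only [hik, if_neg, if_false]
        simp only [Polynomial.degree_zero]
        exact WithBot.bot_lt_coe N
    · rw [Finset.sum_eq_single k]
      · simp only [eq_self_iff_true, if_true]
        rw [← hw, ← mul_assoc, Units.mul_inv, one_mul]
      · intro i hi hik
        rw [hz i hi hik, zero_mul]
      · intro h; exact absurd hk h
  by_cases hone : ∃ k ∈ s, k ≠ i0
  · obtain ⟨k, hk, hki0⟩ := hone
    set s' := s.erase k with hs'def
    have hks' : k ∉ s' := Finset.notMem_erase _ _
    have hi0s' : i0 ∈ s' := Finset.mem_erase.2 ⟨Ne.symm hki0, hi0⟩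
    have hins : insert k s' = s := Finset.insert_erase hk
    have hgcd2 : GCDMonoid.gcd (b k) (s'.gcd b) = s.gcd b := by
      rw [← Finset.gcd_insert, hins]
    set g := s'.gcd b with hgdef
    by_cases hg0 : g = 0
    · have hz : ∀ i ∈ s, i ≠ k → b i = 0 := fun i hi hik =>
        Finset.gcd_eq_zero_iff.1 hg0 i (Finset.mem_erase.2 ⟨hik, hi⟩)
      have hu : IsUnit (b k) := by
        rw [← hgcd2, hg0, gcd_zero_right] at hunit
        exact (normalize_associated (b k)).isUnit hunit
      exact solve_unit k hk hu hz
    · have hcop : IsCoprime (b k) g := (gcd_isUnit_iff _ _).1 (by rw [hgcd2]; exact hunit)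
      obtain ⟨u, v, huv⟩ := hcop
      set e := g.natDegree with hedef
      obtain ⟨i1, hi1, hbi1⟩ : ∃ i ∈ s', b i ≠ 0 := by
        by_contra hcon
        push_neg at hcon
        exact hg0 (Finset.gcd_eq_zero_iff.2 hcon)
      have heN : e ≤ N :=
        le_trans (Polynomial.natDegree_le_of_dvd (Finset.gcd_dvd hi1) hbi1)
          (hbN i1 (Finset.mem_of_mem_erase hi1))
      set g1 := g * C (g.leadingCoeff)⁻¹ with hg1def
      have hg1m : g1.Monic := monic_mul_leadingCoeff_inv hg0
      set xk := (f * u) %ₘ g1 with hxkdef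
      have hdegxk : xk.degree < (e : WithBot ℕ) := by
        have h1 := Polynomial.degree_modByMonic_lt (f * u) hg1m
        rw [hg1def, degree_mul_leadingCoeff_inv g hg0] at h1
        exact lt_of_lt_of_le h1 (Polynomial.degree_le_natDegree)
      have hdvd1 : g ∣ f * u - xk := by
        have h2 : f * u - xk = g1 * ((f * u) /ₘ g1) := by
          rw [hxkdef, modByMonic_eq_sub_mul_div _ g1]; ring
        rw [h2, hg1def]
        exact Dvd.dvd.mul_right (dvd_mul_right g _) _
      have hdvd : g ∣ f - b k * xk := by
        have h2 : f - b k * xk = b k * (f * u - xk) + g * (v * f) := by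
          calc f - b k * xk = (u * b k + v * g) * f - b k * xk := by rw [huv, one_mul]
            _ = b k * (f * u - xk) + g * (v * f) := by ring
        rw [h2]
        exact dvd_add (Dvd.dvd.mul_left hdvd1 _) (dvd_mul_right g _)
      obtain ⟨h, hh⟩ := hdvd
      obtain ⟨c, hc, hc1⟩ := Finset.extract_gcd (s := s') b ⟨i0, hi0s'⟩
      set D := s'.sup (fun i => (c i).natDegree) with hDdef
      have hdeD : (s.sup fun i => (b i).natDegree) ≤ e + D := by
        rcases eq_or_ne (b i0) 0 with h0 | h0
        · rw [hsup, h0]; simp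
        · have hbc : b i0 = g * c i0 := hc i0 hi0s'
          have hci0 : c i0 ≠ 0 := by
            rintro h1
            rw [h1, mul_zero] at hbc
            exact h0 hbc
          rw [hsup, hbc, Polynomial.natDegree_mul hg0 hci0]
          exact add_le_add le_rfl (Finset.le_sup (f := fun i => (c i).natDegree) hi0s')
      have hcN : ∀ i ∈ s', (c i).natDegree ≤ N := by
        intro i hi
        rcases eq_or_ne (b i) 0 with h0 | h0
        · have hci : c i = 0 := by
            have h1 := hc i hi
            rw [h0] at h1
            exact ((mul_eq_zero.1 h1.symm).resolve_left hg0)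
          simp [hci]
        · have hci : c i ≠ 0 := fun h1 => h0 (by rw [hc i hi, h1, mul_zero])
          have h2 : (c i).natDegree ≤ (b i).natDegree := by
            rw [hc i hi, Polynomial.natDegree_mul hg0 hci]
            omega
          exact le_trans h2 (hbN i (Finset.mem_of_mem_erase hi))
      have hdegh : h.degree < ((N + D : ℕ) : WithBot ℕ) := by
        rcases eq_or_ne h 0 with rfl | hne
        · simp only [Polynomial.degree_zero]
          exact WithBot.bot_lt_coe _
        · have hgh : (g * h).degree < ((N + e + D : ℕ) : WithBot ℕ) := by
            rw [← hh]
            apply lt_of_le_of_lt (Polynomial.degree_sub_le _ _)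
            apply max_lt
            · refine lt_of_lt_of_le hf ?_
              have : N + (s.sup fun i => (b i).natDegree) ≤ N + e + D := by omega
              exact_mod_cast Nat.cast_le.2 this
            · rcases eq_or_ne xk 0 with h0 | h0
              · simp only [h0, mul_zero, Polynomial.degree_zero]
                exact bot_lt_iff_ne_bot.mpr (by simp)
              rcases eq_or_ne (b k) 0 with hbk0 | hbk0
              · simp only [hbk0, zero_mul, Polynomial.degree_zero]
                exact bot_lt_iff_ne_bot.mpr (by simp)
              have h1 : xk.natDegree < e := (natDegree_lt_iff_degree_lt h0).2 hdegxk
              have h2 : (b k).natDegree ≤ N := hbN k hk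
              have h3 : (b k * xk).natDegree < N + e + D := by
                rw [natDegree_mul hbk0 h0]; omega
              exact (natDegree_lt_iff_degree_lt (mul_ne_zero hbk0 h0)).1 h3
          have h4 : (g * h).natDegree < N + e + D :=
            (natDegree_lt_iff_degree_lt (mul_ne_zero hg0 hne)).2 hgh
          rw [natDegree_mul hg0 hne] at h4
          exact (natDegree_lt_iff_degree_lt hne).1 (by omega)
      have hc1' : IsUnit (s'.gcd c) := by rw [hc1]; exact isUnit_one
      obtain ⟨y, hy1, hy2⟩ := IH s' (Finset.erase_ssubset hk) c hc1' N hcN h hdegh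
      refine ⟨fun i => if i = k then xk else y i, ?_, ?_⟩
      · intro i
        by_cases hik : i = k
        · simp only [hik, if_pos rfl]
          exact lt_of_lt_of_le hdegxk (by exact_mod_cast Nat.cast_le.2 heN)
        · simpa [hik] using hy1 i
      · rw [← hins, Finset.sum_insert hks']
        simp only [eq_self_iff_true, if_true]
        have hsum : ∑ i ∈ s', b i * (if i = k then xk else y i) = g * ∑ i ∈ s', c i * y i := by
          rw [Finset.mul_sum]
          apply Finset.sum_congr rfl
          intro i hi
          have hik : i ≠ k := (Finset.mem_erase.1 hi).1
          rw [if_neg hik, hc i hi]; ring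
        rw [hsum, hy2, ← hh]; ring
  · push_neg at hone
    have hsing : s = {i0} := by
      apply Finset.eq_singleton_iff_unique_mem.2
      exact ⟨hi0, hone⟩
    have hu : IsUnit (b i0) := by
      rw [hsing, Finset.gcd_singleton] at hunit
      exact (normalize_associated (b i0)).isUnit hunit
    exact solve_unit i0 hi0 hu (fun i hi hik => absurd (hone i hi) hik)


private lemma deg_mul_lt {F : Type} [Field F] {p q : Polynomial F} {d N : ℕ}
    (hp : p.natDegree ≤ d) (hq : q.degree < (N : WithBot ℕ)) :
    (p * q).degree < ((N + d : ℕ) : WithBot ℕ) := by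
  rcases eq_or_ne p 0 with rfl | hp0
  · simp only [zero_mul, Polynomial.degree_zero]
    exact WithBot.bot_lt_coe _
  rcases eq_or_ne q 0 with rfl | hq0
  · simp only [mul_zero, Polynomial.degree_zero]
    exact WithBot.bot_lt_coe _
  have hq' : q.natDegree < N := (Polynomial.natDegree_lt_iff_degree_lt hq0).2 hq
  have h1 : (p * q).natDegree < N + d := by
    rw [Polynomial.natDegree_mul hp0 hq0]; omega
  exact (Polynomial.natDegree_lt_iff_degree_lt (mul_ne_zero hp0 hq0)).1 h1

theorem smyth_count_solutions (F : Type) [Field F] [Fintype F] (n : ℕ) (hn : 3 ≤ n)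
    (a : Fin n → Polynomial F)
    (hcop : Ideal.span (Set.range a) = ⊤)
    (d : ℕ) (hd : d = Finset.univ.sup fun i => (a i).natDegree)
    (habs : ∀ i, (a i).degree ≤ (Finset.univ.erase i).sup fun j => (a j).degree)
    (hirr : ∀ p : Polynomial F, Irreducible p →
      (Finset.univ.filter fun i => p ∣ a i).card ≤ n - 2)
    (N : ℕ) (hN : d ≤ N) (j : Fin n) (xj : Polynomial F)
    (hxj : xj.degree < (N : WithBot ℕ)) :
    Set.ncard {x : Fin n → Polynomial F |
        x j = xj ∧ (∀ i, (x i).degree < (N : WithBot ℕ)) ∧ ∑ i, a i * x i = 0} =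
      Fintype.card F ^ (N * (n - 2) - d) := by
  classical
  have hdeg_a : ∀ i, (a i).natDegree ≤ d := fun i => hd ▸ Finset.le_sup (f := fun i => (a i).natDegree) (Finset.mem_univ i)
  have hd' : ((Finset.univ.erase j).sup fun i => (a i).natDegree) = d := by
    apply le_antisymm
    · exact Finset.sup_le fun i _ => hdeg_a i
    · rw [hd]
      apply Finset.sup_le
      intro i _
      by_cases hij : i = j
      · subst hij
        rcases eq_or_ne (a i) 0 with h0 | h0
        · simp [h0]
        · have h1 : (a i).degree ≤
              (((Finset.univ.erase i).sup fun k => (a k).natDegree : ℕ) : WithBot ℕ) := by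
            refine le_trans (habs i) ?_
            apply Finset.sup_le
            intro k hk
            refine le_trans Polynomial.degree_le_natDegree ?_
            exact_mod_cast Nat.cast_le.2
              (Finset.le_sup (f := fun k => (a k).natDegree) hk)
          exact Polynomial.natDegree_le_iff_degree_le.2 h1
      · exact Finset.le_sup (f := fun i => (a i).natDegree)
          (Finset.mem_erase.2 ⟨hij, Finset.mem_univ i⟩)
  have hgcd : IsUnit ((Finset.univ.erase j).gcd a) := by
    by_contra hng
    have hcard : (Finset.univ.erase j).card = n - 1 := by
      rw [Finset.card_erase_of_mem (Finset.mem_univ j), Finset.card_univ, Fintype.card_fin]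
    have key : ∃ p : Polynomial F, Irreducible p ∧ ∀ i ∈ Finset.univ.erase j, p ∣ a i := by
      by_cases hg0 : (Finset.univ.erase j).gcd a = 0
      · refine ⟨Polynomial.X, Polynomial.irreducible_X, ?_⟩
        intro i hi
        rw [Finset.gcd_eq_zero_iff.1 hg0 i hi]
        exact dvd_zero _
      · obtain ⟨p, hp, hpd⟩ := WfDvdMonoid.exists_irreducible_factor hng hg0
        exact ⟨p, hp, fun i hi => dvd_trans hpd (Finset.gcd_dvd hi)⟩
    obtain ⟨p, hp, hpall⟩ := key
    have hsub : Finset.univ.erase j ⊆ Finset.univ.filter fun i => p ∣ a i := fun i hi =>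
      Finset.mem_filter.2 ⟨Finset.mem_univ i, hpall i hi⟩
    have hcle := le_trans (Finset.card_le_card hsub) (hirr p hp)
    rw [hcard] at hcle
    omega
  haveI hfin1 : Finite (Polynomial.degreeLT F N) :=
    Finite.of_equiv _ (Polynomial.degreeLTEquiv F N).toEquiv.symm
  haveI hfin2 : Finite (Polynomial.degreeLT F (N + d)) :=
    Finite.of_equiv _ (Polynomial.degreeLTEquiv F (N + d)).toEquiv.symm
  let φ : ({i : Fin n // i ≠ j} → Polynomial.degreeLT F N) →+ Polynomial F :=
    { toFun := fun y => ∑ i : {i : Fin n // i ≠ j}, a i.1 * ((y i : Polynomial F)),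
      map_zero' := by simp,
      map_add' := by
        intro y z
        show ∑ i : {i : Fin n // i ≠ j}, a i.1 * (((y + z) i : Polynomial F)) = _
        rw [← Finset.sum_add_distrib]
        refine Finset.sum_congr rfl fun i _ => ?_
        simp [mul_add] }
  have hφapp : ∀ y, φ y = ∑ i : {i : Fin n // i ≠ j}, a i.1 * ((y i : Polynomial F)) :=
    fun _ => rfl
  have hφmem : ∀ y, φ y ∈ Polynomial.degreeLT F (N + d) := by
    intro y
    rw [hφapp, Polynomial.mem_degreeLT]
    refine lt_of_le_of_lt (Polynomial.degree_sum_le _ _) ?_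
    refine (Finset.sup_lt_iff (bot_lt_iff_ne_bot.mpr (by simp))).2 ?_
    intro i _
    exact deg_mul_lt (hdeg_a i.1) (Polynomial.mem_degreeLT.1 (y i).2)
  have hrange : (φ.range : Set (Polynomial F))
      = (Polynomial.degreeLT F (N + d) : Set (Polynomial F)) := by
    apply Set.Subset.antisymm
    · rintro f hf
      obtain ⟨y, rfl⟩ := AddMonoidHom.mem_range.1 hf
      exact hφmem y
    · intro f hf
      obtain ⟨x, hx1, hx2⟩ := surj_lemma (Finset.univ.erase j) a hgcd N
        (fun i _ => le_trans (hdeg_a i) hN) f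
        (by rw [hd']; exact Polynomial.mem_degreeLT.1 hf)
      refine AddMonoidHom.mem_range.2
        ⟨fun i => ⟨x i.1, Polynomial.mem_degreeLT.2 (hx1 i.1)⟩, ?_⟩
      rw [hφapp, ← hx2]
      exact (Finset.sum_subtype (Finset.univ.erase j)
        (fun i => by simp [Finset.mem_erase]) (fun i => a i * x i)).symm
  have hc0mem : -(a j * xj) ∈ Polynomial.degreeLT F (N + d) := by
    rw [Polynomial.mem_degreeLT, Polynomial.degree_neg]
    exact deg_mul_lt (hdeg_a j) hxj
  obtain ⟨y0, hy0⟩ : ∃ y0, φ y0 = -(a j * xj) := by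
    have h1 : -(a j * xj) ∈ (φ.range : Set (Polynomial F)) := by
      rw [hrange]; exact hc0mem
    exact AddMonoidHom.mem_range.1 h1
  have key : ∀ x : Fin n → Polynomial F, x j = xj →
      ((∑ i, a i * x i = 0) ↔
        (∑ i : {i : Fin n // i ≠ j}, a i.1 * x i.1 = -(a j * xj))) := by
    intro x hxj'
    have hsplit : ∑ i, a i * x i = (∑ i ∈ Finset.univ.erase j, a i * x i) + a j * x j :=
      (Finset.sum_erase_add _ _ (Finset.mem_univ j)).symm
    have hsub : ∑ i ∈ Finset.univ.erase j, a i * x i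
        = ∑ i : {i : Fin n // i ≠ j}, a i.1 * x i.1 :=
      Finset.sum_subtype _ (fun i => by simp [Finset.mem_erase]) _
    rw [hsplit, hsub, hxj']
    constructor
    · intro h; exact eq_neg_of_add_eq_zero_left h
    · intro h; rw [h]; exact neg_add_cancel _
  let E : {x : Fin n → Polynomial F |
        x j = xj ∧ (∀ i, (x i).degree < (N : WithBot ℕ)) ∧ ∑ i, a i * x i = 0} ≃
      {y : {i : Fin n // i ≠ j} → Polynomial.degreeLT F N // φ y = -(a j * xj)} :=
    { toFun := fun x =>
        ⟨fun i => ⟨x.1 i.1, Polynomial.mem_degreeLT.2 (x.2.2.1 i.1)⟩, by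
          rw [hφapp]
          exact (key x.1 x.2.1).1 x.2.2.2⟩,
      invFun := fun y =>
        ⟨fun i => if h : i = j then xj else (y.1 ⟨i, h⟩ : Polynomial F), by
          have hx : ∀ i : {i : Fin n // i ≠ j},
              (if h : (i : Fin n) = j then xj else (y.1 ⟨i, h⟩ : Polynomial F))
                = (y.1 i : Polynomial F) := by
            intro i
            rw [dif_neg i.2, Subtype.coe_eta]
          refine ⟨by simp, fun i => ?_, ?_⟩
          · by_cases h : i = j
            · simpa [h] using hxj
            · simpa [h] using Polynomial.mem_degreeLT.1 (y.1 ⟨i, h⟩).2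
          · refine (key _ (by simp)).2 ?_
            have h6 : ∑ i : {i : Fin n // i ≠ j},
                a i.1 * (if h : (i : Fin n) = j then xj else (y.1 ⟨i, h⟩ : Polynomial F))
                = ∑ i : {i : Fin n // i ≠ j}, a i.1 * ((y.1 i : Polynomial F)) :=
              Finset.sum_congr rfl fun i _ => by rw [hx i]
            exact h6.trans ((hφapp y.1).symm.trans y.2)⟩,
      left_inv := by
        intro x
        apply Subtype.ext
        funext i
        by_cases h : i = j
        · simp only [dif_pos h]
          rw [h]
          exact x.2.1.symm
        · simp [dif_neg h],
      right_inv := by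
        intro y
        apply Subtype.ext
        funext i
        apply Subtype.ext
        show (if h : (i : Fin n) = j then xj else (y.1 ⟨i, h⟩ : Polynomial F))
          = (y.1 i : Polynomial F)
        rw [dif_neg i.2, Subtype.coe_eta] }
  let E2 : {y : {i : Fin n // i ≠ j} → Polynomial.degreeLT F N // φ y = -(a j * xj)} ≃ φ.ker :=
    { toFun := fun y => ⟨y.1 - y0, by
        rw [AddMonoidHom.mem_ker, map_sub, y.2, hy0, sub_self]⟩,
      invFun := fun z => ⟨z.1 + y0, by
        rw [map_add, AddMonoidHom.mem_ker.1 z.2, hy0, zero_add]⟩,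
      left_inv := fun y => Subtype.ext (by simp),
      right_inv := fun z => Subtype.ext (by simp) }
  have hsubcard : Fintype.card {i : Fin n // i ≠ j} = n - 1 := by
    rw [Fintype.card_subtype_compl, Fintype.card_subtype_eq, Fintype.card_fin]
  have hVcard : Nat.card (Polynomial.degreeLT F N) = Fintype.card F ^ N := by
    rw [Nat.card_congr (Polynomial.degreeLTEquiv F N).toEquiv, Nat.card_pi]
    simp [Nat.card_eq_fintype_card]
  have hcardM : Nat.card ({i : Fin n // i ≠ j} → Polynomial.degreeLT F N)
      = Fintype.card F ^ (N * (n - 1)) := by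
    rw [Nat.card_pi, Finset.prod_const, hVcard, Finset.card_univ, hsubcard, ← pow_mul,
      mul_comm N]
  have hVcard2 : Nat.card (Polynomial.degreeLT F (N + d)) = Fintype.card F ^ (N + d) := by
    rw [Nat.card_congr (Polynomial.degreeLTEquiv F (N + d)).toEquiv, Nat.card_pi]
    simp [Nat.card_eq_fintype_card]
  have hcardR : Nat.card φ.range = Fintype.card F ^ (N + d) := by
    rw [← hVcard2]
    exact Nat.card_congr (Equiv.setCongr hrange)
  have hker : Nat.card φ.ker = Fintype.card F ^ (N * (n - 2) - d) := by
    have htot := AddSubgroup.card_eq_card_quotient_mul_card_addSubgroup φ.ker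
    have hquot : Nat.card (({i : Fin n // i ≠ j} → Polynomial.degreeLT F N) ⧸ φ.ker)
        = Nat.card φ.range :=
      Nat.card_congr (QuotientAddGroup.quotientKerEquivRange φ).toEquiv
    rw [hcardM, hquot, hcardR] at htot
    have hqpos : 0 < Fintype.card F := Fintype.card_pos
    have hNle : N ≤ N * (n - 2) := by
      have h2 : 1 ≤ n - 2 := by omega
      calc N = N * 1 := (mul_one N).symm
        _ ≤ N * (n - 2) := Nat.mul_le_mul_left N h2
    have hdle : d ≤ N * (n - 2) := le_trans hN hNle
    have hexp : N * (n - 1) = (N + d) + (N * (n - 2) - d) := by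
      have h3 : n - 1 = 1 + (n - 2) := by omega
      rw [h3, Nat.mul_add, mul_one, add_assoc, Nat.add_sub_cancel' hdle]
    rw [hexp, pow_add] at htot
    exact (Nat.eq_of_mul_eq_mul_left (pow_pos hqpos _) htot).symm
  rw [← Nat.card_coe_set_eq, Nat.card_congr E, Nat.card_congr E2, hker]
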